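/- There is an absolute constant C > 0 such that for every ρ > 0 and every λ ∈ (0,1], (2/λ³) 𝒢(λ) ≤ (1/λ) Z(λ^{-(1+ρ)}) + C ‖G‖² λ^{-4} e^{-λ^{-ρ}/2}. -/

import Mathlib

open MeasureTheory
open scoped RealInnerProductSpace

open Set Filter intervalIntegral
open scoped Topology

section Helpers

variable {E : Type*} [NormedAddCommGroup E] [NormedSpace ℝ E] [CompleteSpace E]

lemma prim_hasDerivAt {f : ℝ → E} (hf : Continuous f) (t : ℝ) :
    HasDerivAt (fun u => ∫ s in (0:ℝ)..u, f s) (f t) t :=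
  intervalIntegral.integral_hasDerivAt_right (hf.intervalIntegrable _ _)
    (hf.stronglyMeasurableAtFilter _ _) hf.continuousAt

lemma prim_continuous {f : ℝ → E} (hf : Continuous f) :
    Continuous (fun u => ∫ s in (0:ℝ)..u, f s) :=
  continuous_iff_continuousAt.mpr fun t => (prim_hasDerivAt hf t).continuousAt

lemma exp_neg_hasDerivAt (c t : ℝ) :
    HasDerivAt (fun t => Real.exp (-(c * t))) (-c * Real.exp (-(c * t))) t := by
  have h1 : HasDerivAt (fun t : ℝ => -(c * t)) (-c) t := by
    simpa using ((hasDerivAt_id t).const_mul c).fun_neg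
  simpa [mul_comm, Function.comp_def] using (Real.hasDerivAt_exp (-(c * t))).comp t h1

lemma integral_exp_neg_Ioi' {c : ℝ} (hc : 0 < c) (a : ℝ) :
    ∫ t in Ioi a, Real.exp (-(c * t)) = Real.exp (-(c * a)) / c := by
  have hder : ∀ x ∈ Ioi a, HasDerivAt (fun t => -(Real.exp (-(c * t)) / c))
      (Real.exp (-(c * x))) x := by
    intro x _
    have := ((exp_neg_hasDerivAt c x).div_const c).fun_neg
    refine this.congr_deriv ?_
    field_simp
  have hint : IntegrableOn (fun t => Real.exp (-(c * t))) (Ioi a) := by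
    simpa [neg_mul] using exp_neg_integrableOn_Ioi a hc
  have htend : Tendsto (fun t => -(Real.exp (-(c * t)) / c)) atTop (𝓝 0) := by
    have h1 : Tendsto (fun t : ℝ => Real.exp (-(c * t))) atTop (𝓝 0) := by
      have h2 : Tendsto (fun t : ℝ => c * t) atTop atTop :=
        tendsto_id.const_mul_atTop hc
      exact Real.tendsto_exp_neg_atTop_nhds_zero.comp h2
    simpa using (h1.div_const c).neg
  have hcont : ContinuousWithinAt (fun t => -(Real.exp (-(c * t)) / c)) (Ici a) a := by
    exact (((Real.continuous_exp.comp (continuous_const.mul continuous_id).neg).div_const c).neg).continuousWithinAt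
  have := integral_Ioi_of_hasDerivAt_of_tendsto hcont hder hint htend
  rw [this]; field_simp; ring

end Helpers

section Helpers2

lemma integral_exp_half {lam : ℝ} (hl : 0 < lam) (t : ℝ) :
    ∫ s in (0:ℝ)..t, Real.exp (lam / 2 * s) =
      2 / lam * Real.exp (lam / 2 * t) - 2 / lam := by
  have hder : ∀ x ∈ Set.uIcc (0:ℝ) t, HasDerivAt (fun s => 2 / lam * Real.exp (lam / 2 * s))
      (Real.exp (lam / 2 * x)) x := by
    intro x _
    have h1 : HasDerivAt (fun s : ℝ => lam / 2 * s) (lam / 2) x := by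
      simpa using (hasDerivAt_id x).const_mul (lam / 2)
    have := (h1.exp).const_mul (2 / lam)
    refine this.congr_deriv ?_
    field_simp
  have hint : IntervalIntegrable (fun x => Real.exp (lam / 2 * x)) volume 0 t :=
    (Real.continuous_exp.comp (continuous_const.mul continuous_id)).intervalIntegrable _ _
  rw [intervalIntegral.integral_eq_sub_of_hasDerivAt hder hint]
  simp [mul_comm]

lemma prim_bound {lam c : ℝ} (hl : 0 < lam) (hc : 0 ≤ c) {f : ℝ → ℝ} (hf : Continuous f)
    (hb : ∀ t, 0 ≤ t → |f t| ≤ c * Real.exp (lam / 2 * t)) :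
    ∀ t, 0 ≤ t → |∫ s in (0:ℝ)..t, f s| ≤ 2 * c / lam * Real.exp (lam / 2 * t) := by
  intro t ht
  have h1 : |∫ s in (0:ℝ)..t, f s| ≤ ∫ s in (0:ℝ)..t, |f s| :=
    intervalIntegral.abs_integral_le_integral_abs ht
  have h2 : (∫ s in (0:ℝ)..t, |f s|) ≤ ∫ s in (0:ℝ)..t, c * Real.exp (lam / 2 * s) := by
    apply intervalIntegral.integral_mono_on ht (hf.abs.intervalIntegrable _ _)
      ((continuous_const.mul (Real.continuous_exp.comp
        (continuous_const.mul continuous_id))).intervalIntegrable _ _)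
    intro s hs
    exact hb s hs.1
  have h3 : (∫ s in (0:ℝ)..t, c * Real.exp (lam / 2 * s)) =
      c * (2 / lam * Real.exp (lam / 2 * t) - 2 / lam) := by
    rw [intervalIntegral.integral_const_mul, integral_exp_half hl]
  have h4 : c * (2 / lam * Real.exp (lam / 2 * t) - 2 / lam) ≤
      2 * c / lam * Real.exp (lam / 2 * t) := by
    have h5 : (0:ℝ) ≤ 2 * c / lam := by positivity
    have h6 : c * (2 / lam * Real.exp (lam / 2 * t) - 2 / lam) =
        2 * c / lam * Real.exp (lam / 2 * t) - 2 * c / lam := by ring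
    linarith
  linarith

lemma exp_mul_integrableOn {lam c : ℝ} (hl : 0 < lam) {f : ℝ → ℝ} (hf : Continuous f)
    (hb : ∀ t, 0 ≤ t → |f t| ≤ c * Real.exp (lam / 2 * t)) :
    IntegrableOn (fun t => Real.exp (-(lam * t)) * f t) (Ioi (0:ℝ)) := by
  have hmaj : IntegrableOn (fun t => c * Real.exp (-(lam / 2 * t))) (Ioi (0:ℝ)) := by
    have := exp_neg_integrableOn_Ioi (0:ℝ) (by positivity : 0 < lam / 2)
    simpa [neg_mul, IntegrableOn] using this.const_mul c
  apply Integrable.mono' hmaj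
  · exact ((Real.continuous_exp.comp (continuous_const.mul continuous_id).neg).mul
      hf).aestronglyMeasurable
  · filter_upwards [ae_restrict_mem measurableSet_Ioi] with t ht
    have ht0 : (0:ℝ) ≤ t := le_of_lt ht
    have h1 : ‖Real.exp (-(lam * t)) * f t‖ = Real.exp (-(lam * t)) * |f t| := by
      rw [Real.norm_eq_abs, abs_mul, abs_of_pos (Real.exp_pos _)]
    rw [h1]
    calc Real.exp (-(lam * t)) * |f t| ≤
        Real.exp (-(lam * t)) * (c * Real.exp (lam / 2 * t)) :=
          mul_le_mul_of_nonneg_left (hb t ht0) (Real.exp_pos _).le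
      _ = c * Real.exp (-(lam / 2 * t)) := by
          rw [← mul_assoc, mul_comm (Real.exp _) c, mul_assoc, ← Real.exp_add]
          ring_nf

end Helpers2

section Helpers3

lemma laplace_step {lam c : ℝ} (hl : 0 < lam) (hc : 0 ≤ c) {f : ℝ → ℝ} (hf : Continuous f)
    (hb : ∀ t, 0 ≤ t → |f t| ≤ c * Real.exp (lam / 2 * t)) :
    ∫ t in Ioi (0:ℝ), Real.exp (-(lam * t)) * (∫ s in (0:ℝ)..t, f s) =
      (1 / lam) * ∫ t in Ioi (0:ℝ), Real.exp (-(lam * t)) * f t := by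
  set F : ℝ → ℝ := fun t => ∫ s in (0:ℝ)..t, f s with hF
  have hF' : ∀ t, HasDerivAt F (f t) t := prim_hasDerivAt hf
  have hFc : Continuous F := prim_continuous hf
  have hFb : ∀ t, 0 ≤ t → |F t| ≤ 2 * c / lam * Real.exp (lam / 2 * t) :=
    prim_bound hl hc hf hb
  have intLHS : IntegrableOn (fun t => Real.exp (-(lam * t)) * F t) (Ioi (0:ℝ)) :=
    exp_mul_integrableOn hl hFc hFb
  have intRHS : IntegrableOn (fun t => Real.exp (-(lam * t)) * f t) (Ioi (0:ℝ)) :=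
    exp_mul_integrableOn hl hf hb
  set g : ℝ → ℝ := fun t => -(Real.exp (-(lam * t)) * F t / lam) with hg
  have hgd : ∀ t, HasDerivAt g
      (Real.exp (-(lam * t)) * F t - Real.exp (-(lam * t)) * f t / lam) t := by
    intro t
    have hprod : HasDerivAt (fun t => Real.exp (-(lam * t)) * F t)
        (-lam * Real.exp (-(lam * t)) * F t + Real.exp (-(lam * t)) * f t) t :=
      (exp_neg_hasDerivAt lam t).mul (hF' t)
    have hne : lam ≠ 0 := ne_of_gt hl
    have h0 := (hprod.div_const lam).neg
    have h9 : -((-lam * Real.exp (-(lam * t)) * F t + Real.exp (-(lam * t)) * f t) / lam) =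
        Real.exp (-(lam * t)) * F t - Real.exp (-(lam * t)) * f t / lam := by
      field_simp
      ring
    rw [h9] at h0
    exact h0
  have key : ∀ A : ℝ, ∫ t in (0:ℝ)..A, Real.exp (-(lam * t)) * F t =
      g A - g 0 + (1 / lam) * ∫ t in (0:ℝ)..A, Real.exp (-(lam * t)) * f t := by
    intro A
    have hcont1 : Continuous fun t => Real.exp (-(lam * t)) * F t :=
      (Real.continuous_exp.comp (continuous_const.mul continuous_id).neg).mul hFc
    have hcont2 : Continuous fun t => Real.exp (-(lam * t)) * f t :=
      (Real.continuous_exp.comp (continuous_const.mul continuous_id).neg).mul hf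
    have h1 : ∫ t in (0:ℝ)..A,
        (Real.exp (-(lam * t)) * F t - Real.exp (-(lam * t)) * f t / lam) = g A - g 0 :=
      intervalIntegral.integral_eq_sub_of_hasDerivAt (fun x _ => hgd x)
        ((hcont1.sub (hcont2.div_const lam)).intervalIntegrable _ _)
    have h2 : ∫ t in (0:ℝ)..A,
        (Real.exp (-(lam * t)) * F t - Real.exp (-(lam * t)) * f t / lam) =
        (∫ t in (0:ℝ)..A, Real.exp (-(lam * t)) * F t) -
          (∫ t in (0:ℝ)..A, Real.exp (-(lam * t)) * f t) / lam := by
      rw [intervalIntegral.integral_sub (hcont1.intervalIntegrable _ _)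
        ((hcont2.div_const lam).intervalIntegrable _ _),
        intervalIntegral.integral_div]
    rw [h2] at h1
    have : (∫ t in (0:ℝ)..A, Real.exp (-(lam * t)) * f t) / lam =
        (1 / lam) * ∫ t in (0:ℝ)..A, Real.exp (-(lam * t)) * f t := by ring
    linarith [h1]
  have T1 : Tendsto (fun A => ∫ t in (0:ℝ)..A, Real.exp (-(lam * t)) * F t) atTop
      (𝓝 (∫ t in Ioi (0:ℝ), Real.exp (-(lam * t)) * F t)) :=
    intervalIntegral_tendsto_integral_Ioi 0 intLHS tendsto_id
  have hg0 : g 0 = 0 := by simp [hg, hF]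
  have Tg : Tendsto g atTop (𝓝 0) := by
    apply squeeze_zero_norm' (a := fun A => 2 * c / lam ^ 2 * Real.exp (-(lam / 2 * A)))
    · filter_upwards [eventually_ge_atTop (0:ℝ)] with A hA
      have h1 : ‖g A‖ = Real.exp (-(lam * A)) * |F A| / lam := by
        rw [hg]
        rw [Real.norm_eq_abs, abs_neg, abs_div, abs_mul, abs_of_pos (Real.exp_pos _),
          abs_of_pos hl]
      rw [h1]
      have h2 : Real.exp (-(lam * A)) * |F A| ≤
          Real.exp (-(lam * A)) * (2 * c / lam * Real.exp (lam / 2 * A)) :=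
        mul_le_mul_of_nonneg_left (hFb A hA) (Real.exp_pos _).le
      have h3 : Real.exp (-(lam * A)) * (2 * c / lam * Real.exp (lam / 2 * A)) =
          2 * c / lam * Real.exp (-(lam / 2 * A)) := by
        rw [mul_comm (Real.exp _), mul_assoc, ← Real.exp_add]
        ring_nf
      have h4 : Real.exp (-(lam * A)) * |F A| / lam ≤
          2 * c / lam * Real.exp (-(lam / 2 * A)) / lam := by
        have h2' := le_trans h2 (le_of_eq h3)
        gcongr
      calc Real.exp (-(lam * A)) * |F A| / lam ≤
          2 * c / lam * Real.exp (-(lam / 2 * A)) / lam := h4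
        _ = 2 * c / lam ^ 2 * Real.exp (-(lam / 2 * A)) := by ring
    · have h2 : Tendsto (fun A : ℝ => lam / 2 * A) atTop atTop :=
        tendsto_id.const_mul_atTop (by positivity)
      have := Real.tendsto_exp_neg_atTop_nhds_zero.comp h2
      simpa using this.const_mul (2 * c / lam ^ 2)
  have T2 : Tendsto (fun A => g A - g 0 + (1 / lam) * ∫ t in (0:ℝ)..A,
      Real.exp (-(lam * t)) * f t) atTop
      (𝓝 (0 - g 0 + (1 / lam) * ∫ t in Ioi (0:ℝ), Real.exp (-(lam * t)) * f t)) :=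
    ((Tg.sub_const (g 0)).add
      ((intervalIntegral_tendsto_integral_Ioi 0 intRHS tendsto_id).const_mul (1 / lam)))
  have := tendsto_nhds_unique (T1.congr fun A => (key A)) T2
  rw [this, hg0]
  ring

end Helpers3

/-- Let `(P_t)` be a strongly continuous one-parameter group of orthogonal
operators on a real Hilbert space `H`, `G ∈ H`, `h(s) = ⟨P_s G, G⟩`,
`Z(t) = 2∫₀^t∫₀^s∫₀^{s₁} h(s₂) ds₂ ds₁ ds` and `𝒢(λ) = ∫₀^∞ e^{-λs} h(s) ds`.
There is an absolute constant `C > 0` such that for every `ρ > 0` and every `λ ∈ (0,1]`,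
`(2/λ³)𝒢(λ) ≤ (1/λ) Z(λ^{-(1+ρ)}) + C ‖G‖² λ^{-4} e^{-λ^{-ρ}/2}`. -/
theorem stmt7 {H : Type*} [NormedAddCommGroup H] [InnerProductSpace ℝ H] [CompleteSpace H]
    (P : ℝ → H ≃ₗᵢ[ℝ] H)
    (hP0 : ∀ x : H, P 0 x = x)
    (hPadd : ∀ s t : ℝ, ∀ x : H, P (s + t) x = P s (P t x))
    (hPcont : ∀ x : H, Continuous fun t : ℝ => P t x)
    (G : H)
    (Z : ℝ → ℝ)
    (hZ : ∀ t : ℝ, Z t =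
      2 * ∫ s in (0:ℝ)..t, ∫ s₁ in (0:ℝ)..s, ∫ s₂ in (0:ℝ)..s₁, ⟪P s₂ G, G⟫)
    (𝒢 : ℝ → ℝ)
    (h𝒢 : ∀ l : ℝ, 𝒢 l = ∫ s in Set.Ioi (0:ℝ), Real.exp (-l * s) * ⟪P s G, G⟫) :
    ∃ C > (0:ℝ), ∀ ρ > (0:ℝ), ∀ l ∈ Set.Ioc (0:ℝ) 1,
      (2 / l ^ 3) * 𝒢 l ≤
        (1 / l) * Z (l ^ (-(1 + ρ))) +
          C * ‖G‖ ^ 2 * l ^ (-4 : ℝ) * Real.exp (-(l ^ (-ρ)) / 2) := by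
  refine ⟨32, by norm_num, ?_⟩
  intro ρ hρ l hl
  obtain ⟨hl0, hl1⟩ := hl
  have hlne : l ≠ 0 := ne_of_gt hl0
  set M : ℝ := ‖G‖ ^ 2 with hM
  have hM0 : 0 ≤ M := by positivity
  -- the kernel function
  set h : ℝ → ℝ := fun s => ⟪P s G, G⟫ with hh
  have hcont : Continuous h := Continuous.inner (hPcont G) continuous_const
  have habs : ∀ s, |h s| ≤ M := by
    intro s
    calc |h s| ≤ ‖P s G‖ * ‖G‖ := abs_real_inner_le_norm _ _
      _ = M := by rw [(P s).norm_map, hM, sq]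
  -- iterated primitives
  set F1 : ℝ → ℝ := fun t => ∫ s in (0:ℝ)..t, h s with hF1
  set F2 : ℝ → ℝ := fun t => ∫ s in (0:ℝ)..t, F1 s with hF2
  set F3 : ℝ → ℝ := fun t => ∫ s in (0:ℝ)..t, F2 s with hF3
  have hF1c : Continuous F1 := prim_continuous hcont
  have hF2c : Continuous F2 := prim_continuous hF1c
  have hF3c : Continuous F3 := prim_continuous hF2c
  have hZ' : ∀ t, Z t = 2 * F3 t := by
    intro t
    rw [hZ t]
  -- exponential bounds
  have hb0 : ∀ t, 0 ≤ t → |h t| ≤ M * Real.exp (l / 2 * t) := by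
    intro t ht
    exact (habs t).trans (le_mul_of_one_le_right hM0 (Real.one_le_exp (by positivity)))
  have hc1 : (0:ℝ) ≤ 2 * M / l := by positivity
  have hc2 : (0:ℝ) ≤ 2 * (2 * M / l) / l := by positivity
  have hc3 : (0:ℝ) ≤ 2 * (2 * (2 * M / l) / l) / l := by positivity
  have hb1 : ∀ t, 0 ≤ t → |F1 t| ≤ 2 * M / l * Real.exp (l / 2 * t) :=
    prim_bound hl0 hM0 hcont hb0
  have hb2 : ∀ t, 0 ≤ t → |F2 t| ≤ 2 * (2 * M / l) / l * Real.exp (l / 2 * t) :=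
    prim_bound hl0 hc1 hF1c hb1
  have hb3 : ∀ t, 0 ≤ t → |F3 t| ≤ 2 * (2 * (2 * M / l) / l) / l * Real.exp (l / 2 * t) :=
    prim_bound hl0 hc2 hF2c hb2
  -- Laplace transform chain
  have L1 : ∫ t in Set.Ioi (0:ℝ), Real.exp (-(l * t)) * F1 t =
      (1 / l) * ∫ t in Set.Ioi (0:ℝ), Real.exp (-(l * t)) * h t :=
    laplace_step hl0 hM0 hcont hb0
  have L2 : ∫ t in Set.Ioi (0:ℝ), Real.exp (-(l * t)) * F2 t =
      (1 / l) * ∫ t in Set.Ioi (0:ℝ), Real.exp (-(l * t)) * F1 t :=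
    laplace_step hl0 hc1 hF1c hb1
  have L3 : ∫ t in Set.Ioi (0:ℝ), Real.exp (-(l * t)) * F3 t =
      (1 / l) * ∫ t in Set.Ioi (0:ℝ), Real.exp (-(l * t)) * F2 t :=
    laplace_step hl0 hc2 hF2c hb2
  have hGval : ∫ t in Set.Ioi (0:ℝ), Real.exp (-(l * t)) * h t = 𝒢 l := by
    rw [h𝒢 l]
    simp only [hh, neg_mul]
  have hZcontfun : Continuous Z := by
    have : Z = fun t => 2 * F3 t := funext hZ'
    rw [this]
    exact continuous_const.mul hF3c
  have hZb : ∀ t, 0 ≤ t → |Z t| ≤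
      2 * (2 * (2 * (2 * M / l) / l) / l) * Real.exp (l / 2 * t) := by
    intro t ht
    rw [hZ' t, abs_mul, abs_two]
    calc 2 * |F3 t| ≤ 2 * (2 * (2 * (2 * M / l) / l) / l * Real.exp (l / 2 * t)) := by
          have := hb3 t ht
          linarith
      _ = 2 * (2 * (2 * (2 * M / l) / l) / l) * Real.exp (l / 2 * t) := by ring
  have hZint : IntegrableOn (fun t => Real.exp (-(l * t)) * Z t) (Set.Ioi (0:ℝ)) :=
    exp_mul_integrableOn hl0 hZcontfun hZb
  -- the Laplace identity for Z
  have eqKey : ∫ t in Set.Ioi (0:ℝ), Real.exp (-(l * t)) * Z t = (2 / l ^ 3) * 𝒢 l := by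
    have hfun : (fun t => Real.exp (-(l * t)) * Z t) =
        fun t => 2 * (Real.exp (-(l * t)) * F3 t) := by
      funext t; rw [hZ' t]; ring
    rw [hfun, MeasureTheory.integral_const_mul, L3, L2, L1, hGval]
    have hl3 : l ^ 3 ≠ 0 := pow_ne_zero _ hlne
    field_simp
    try exact Or.inl trivial
  -- Z is nondecreasing on [0, ∞): F2 = (1/2)⟪V,V⟫ ≥ 0
  set V : ℝ → H := fun s => ∫ u in (0:ℝ)..s, P u G with hV
  have hVd : ∀ s, HasDerivAt V (P s G) s := prim_hasDerivAt (hPcont G)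
  have hgrp : ∀ a b : ℝ, ⟪P a G, P b G⟫ = ⟪P (a - b) G, G⟫ := by
    intro a b
    have h1 : P b (P (a - b) G) = P a G := by
      rw [← hPadd b (a - b) G, show b + (a - b) = a by ring]
    calc ⟪P a G, P b G⟫ = ⟪P b (P (a - b) G), P b (P 0 G)⟫ := by rw [h1, hP0]
      _ = ⟪P (a - b) G, P 0 G⟫ := (P b).inner_map_map _ _
      _ = ⟪P (a - b) G, G⟫ := by rw [hP0]
  have hinner : ∀ s, ⟪P s G, V s⟫ = F1 s := by
    intro s
    have h1 : ⟪P s G, V s⟫ = ∫ u in (0:ℝ)..s, ⟪P s G, P u G⟫ := by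
      rw [hV]
      exact ((innerSL ℝ (P s G)).intervalIntegral_comp_comm
        ((hPcont G).intervalIntegrable 0 s)).symm
    rw [h1]
    have h2 : (fun u => (⟪P s G, P u G⟫ : ℝ)) = fun u => h (s - u) := by
      funext u
      rw [hgrp s u]
    rw [h2, intervalIntegral.integral_comp_sub_left h s]
    simp [hF1]
  have hqd : ∀ s, HasDerivAt (fun s => (⟪V s, V s⟫ : ℝ)) (2 * F1 s) s := by
    intro s
    have h1 := HasDerivAt.inner ℝ (hVd s) (hVd s)
    have h2 : (⟪V s, P s G⟫ : ℝ) + ⟪P s G, V s⟫ = 2 * F1 s := by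
      have ha := hinner s
      have hb' : (⟪V s, P s G⟫ : ℝ) = F1 s := by rw [real_inner_comm]; exact ha
      rw [ha, hb']
      ring
    rwa [h2] at h1
  have hDd : ∀ s, HasDerivAt (fun s => F2 s - (1/2) * ⟪V s, V s⟫) 0 s := by
    intro s
    have h1 : HasDerivAt F2 (F1 s) s := prim_hasDerivAt hF1c s
    have h2 := (hqd s).const_mul (1/2 : ℝ)
    have h3 := h1.sub h2
    have h4 : F1 s - 1/2 * (2 * F1 s) = 0 := by ring
    rwa [h4] at h3
  have hF2q : ∀ t, F2 t = (1/2) * ⟪V t, V t⟫ := by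
    intro t
    have hdiff : Differentiable ℝ (fun s => F2 s - (1/2) * ⟪V s, V s⟫) :=
      fun s => (hDd s).differentiableAt
    have hconst := is_const_of_deriv_eq_zero hdiff (fun x => (hDd x).deriv) t 0
    have hV0 : V 0 = 0 := by simp [hV]
    have hF20 : F2 0 = 0 := by simp [hF2]
    rw [hF20, hV0] at hconst
    simp only [inner_zero_right, mul_zero, sub_zero] at hconst
    linarith [hconst]
  have hF2nonneg : ∀ t, 0 ≤ F2 t := by
    intro t
    rw [hF2q t]
    have := real_inner_self_nonneg (x := V t)
    linarith
  have hZmono : ∀ a b : ℝ, 0 ≤ a → a ≤ b → Z a ≤ Z b := by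
    intro a b _ hab
    rw [hZ' a, hZ' b]
    have h1 : F3 b - F3 a = ∫ s in a..b, F2 s :=
      intervalIntegral.integral_interval_sub_left
        (hF2c.intervalIntegrable 0 b) (hF2c.intervalIntegrable 0 a)
    have h2 : 0 ≤ ∫ s in a..b, F2 s :=
      intervalIntegral.integral_nonneg hab (fun u _ => hF2nonneg u)
    linarith
  have hZ0 : Z 0 = 0 := by
    rw [hZ' 0]
    simp [hF3]
  -- final estimate
  set T : ℝ := l ^ (-(1 + ρ)) with hT
  have hT0 : 0 < T := Real.rpow_pos_of_pos hl0 _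
  have hlT : l * T = l ^ (-ρ) := by
    rw [hT, show l * l ^ (-(1 + ρ)) = l ^ (1:ℝ) * l ^ (-(1 + ρ)) by rw [Real.rpow_one],
      ← Real.rpow_add hl0]
    norm_num
  have hsplit : ∫ t in Set.Ioi (0:ℝ), Real.exp (-(l * t)) * Z t =
      (∫ t in Set.Ioc (0:ℝ) T, Real.exp (-(l * t)) * Z t) +
      ∫ t in Set.Ioi T, Real.exp (-(l * t)) * Z t := by
    rw [← Set.Ioc_union_Ioi_eq_Ioi hT0.le]
    exact setIntegral_union (Set.Ioc_disjoint_Ioi le_rfl) measurableSet_Ioi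
      (hZint.mono_set Set.Ioc_subset_Ioi_self)
      (hZint.mono_set (Set.Ioi_subset_Ioi hT0.le))
  have hZTnn : 0 ≤ Z T := by rw [← hZ0]; exact hZmono 0 T le_rfl hT0.le
  have part1 : (∫ t in Set.Ioc (0:ℝ) T, Real.exp (-(l * t)) * Z t) ≤ (1 / l) * Z T := by
    have hint1 : IntegrableOn (fun t => Real.exp (-(l * t)) * Z t) (Set.Ioc 0 T) :=
      hZint.mono_set Set.Ioc_subset_Ioi_self
    have hint2 : IntegrableOn (fun t => Real.exp (-(l * t)) * Z T) (Set.Ioc 0 T) := by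
      apply Continuous.integrableOn_Ioc
      exact (Real.continuous_exp.comp (continuous_const.mul continuous_id).neg).mul
        continuous_const
    have hmono : (∫ t in Set.Ioc (0:ℝ) T, Real.exp (-(l * t)) * Z t) ≤
        ∫ t in Set.Ioc (0:ℝ) T, Real.exp (-(l * t)) * Z T := by
      apply setIntegral_mono_on hint1 hint2 measurableSet_Ioc
      intro t ht
      exact mul_le_mul_of_nonneg_left (hZmono t T ht.1.le ht.2) (Real.exp_pos _).le
    have heq : (∫ t in Set.Ioc (0:ℝ) T, Real.exp (-(l * t)) * Z T) =
        (∫ t in Set.Ioc (0:ℝ) T, Real.exp (-(l * t))) * Z T :=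
      MeasureTheory.integral_mul_const _ _
    have hexpint : (∫ t in Set.Ioc (0:ℝ) T, Real.exp (-(l * t))) ≤ 1 / l := by
      have hmaj : IntegrableOn (fun t => Real.exp (-(l * t))) (Set.Ioi (0:ℝ)) := by
        simpa [neg_mul] using exp_neg_integrableOn_Ioi (0:ℝ) hl0
      have h1 : (∫ t in Set.Ioc (0:ℝ) T, Real.exp (-(l * t))) ≤
          ∫ t in Set.Ioi (0:ℝ), Real.exp (-(l * t)) := by
        apply setIntegral_mono_set hmaj
        · filter_upwards with t using (Real.exp_pos _).le
        · exact HasSubset.Subset.eventuallyLE Set.Ioc_subset_Ioi_self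
      have h2 := integral_exp_neg_Ioi' hl0 0
      rw [mul_zero, neg_zero, Real.exp_zero] at h2
      linarith
    calc (∫ t in Set.Ioc (0:ℝ) T, Real.exp (-(l * t)) * Z t) ≤
        (∫ t in Set.Ioc (0:ℝ) T, Real.exp (-(l * t))) * Z T := by rw [← heq]; exact hmono
      _ ≤ (1 / l) * Z T := mul_le_mul_of_nonneg_right hexpint hZTnn
  have part2 : (∫ t in Set.Ioi T, Real.exp (-(l * t)) * Z t) ≤
      (2 * (2 * (2 * (2 * M / l) / l) / l)) * (Real.exp (-(l / 2 * T)) / (l / 2)) := by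
    have hc3nn : (0:ℝ) ≤ 2 * (2 * (2 * (2 * M / l) / l) / l) := by positivity
    have hint1 : IntegrableOn (fun t => Real.exp (-(l * t)) * Z t) (Set.Ioi T) :=
      hZint.mono_set (Set.Ioi_subset_Ioi hT0.le)
    have hint2 : IntegrableOn
        (fun t => 2 * (2 * (2 * (2 * M / l) / l) / l) * Real.exp (-(l / 2 * t)))
        (Set.Ioi T) := by
      simpa [neg_mul, IntegrableOn] using (exp_neg_integrableOn_Ioi T
        (by positivity : 0 < l / 2)).const_mul (2 * (2 * (2 * (2 * M / l) / l) / l))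
    have hmono : (∫ t in Set.Ioi T, Real.exp (-(l * t)) * Z t) ≤
        ∫ t in Set.Ioi T, 2 * (2 * (2 * (2 * M / l) / l) / l) * Real.exp (-(l / 2 * t)) := by
      apply setIntegral_mono_on hint1 hint2 measurableSet_Ioi
      intro t ht
      have ht0 : (0:ℝ) ≤ t := le_of_lt (lt_trans hT0 ht)
      calc Real.exp (-(l * t)) * Z t ≤
          Real.exp (-(l * t)) * (2 * (2 * (2 * (2 * M / l) / l) / l) * Real.exp (l / 2 * t)) :=
            mul_le_mul_of_nonneg_left (le_trans (le_abs_self _) (hZb t ht0))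
              (Real.exp_pos _).le
        _ = 2 * (2 * (2 * (2 * M / l) / l) / l) * Real.exp (-(l / 2 * t)) := by
            rw [mul_comm (Real.exp _), mul_assoc, ← Real.exp_add]
            ring_nf
    have heq : (∫ t in Set.Ioi T, 2 * (2 * (2 * (2 * M / l) / l) / l) *
        Real.exp (-(l / 2 * t))) =
        2 * (2 * (2 * (2 * M / l) / l) / l) * (Real.exp (-(l / 2 * T)) / (l / 2)) := by
      rw [MeasureTheory.integral_const_mul,
        integral_exp_neg_Ioi' (by positivity : 0 < l / 2) T]
    rw [← heq]
    exact hmono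
  have hexparg : -(l / 2 * T) = -(l ^ (-ρ)) / 2 := by rw [← hlT]; ring
  have hpow : l ^ (-4 : ℝ) = (l ^ 4)⁻¹ := by
    rw [show (-4 : ℝ) = ((-4 : ℤ) : ℝ) by norm_num, Real.rpow_intCast, zpow_neg]
    norm_cast
  have hfinal : (2 * (2 * (2 * (2 * M / l) / l) / l)) * (Real.exp (-(l / 2 * T)) / (l / 2)) =
      32 * M * l ^ (-4 : ℝ) * Real.exp (-(l ^ (-ρ)) / 2) := by
    rw [hexparg, hpow]
    field_simp
    ring
  calc (2 / l ^ 3) * 𝒢 l = ∫ t in Set.Ioi (0:ℝ), Real.exp (-(l * t)) * Z t := eqKey.symm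
    _ = (∫ t in Set.Ioc (0:ℝ) T, Real.exp (-(l * t)) * Z t) +
        ∫ t in Set.Ioi T, Real.exp (-(l * t)) * Z t := hsplit
    _ ≤ (1 / l) * Z T + (2 * (2 * (2 * (2 * M / l) / l) / l)) *
        (Real.exp (-(l / 2 * T)) / (l / 2)) := add_le_add part1 part2
    _ = (1 / l) * Z T + 32 * M * l ^ (-4 : ℝ) * Real.exp (-(l ^ (-ρ)) / 2) := by
        rw [hfinal]
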